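/- If S = Σ_{i=1}^n B_i is a sum of independent Bernoulli(p_i) variables with integer mean μ = Σ p_i = k, and not all p_i ∈ {0,1}, then k is the unique mode of S: P(S = k) > P(S = j) for all j ≠ k. -/

import Mathlib

open Finset

/-- list-based pmf of sum of Bernoullis, with ℤ index -/
noncomputable def fL : List ℝ → ℤ → ℝ
  | [], j => if j = 0 then 1 else 0
  | p :: l, j => (1 - p) * fL l j + p * fL l (j - 1)

@[simp] theorem fL_nil (j : ℤ) : fL [] j = if j = 0 then 1 else 0 := rfl
@[simp] theorem fL_cons (p : ℝ) (l : List ℝ) (j : ℤ) :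
    fL (p :: l) j = (1 - p) * fL l j + p * fL l (j - 1) := rfl

theorem fL_neg : ∀ (l : List ℝ) (j : ℤ), j < 0 → fL l j = 0 := by
  intro l
  induction l with
  | nil => intro j hj; simp [fL]; omega
  | cons p l ih =>
    intro j hj
    rw [fL_cons, ih j hj, ih (j-1) (by omega)]; ring

theorem fL_nonneg : ∀ (l : List ℝ), (∀ x ∈ l, 0 ≤ x ∧ x ≤ 1) → ∀ j, 0 ≤ fL l j := by
  intro l
  induction l with
  | nil => intro _ j; simp [fL]; split <;> norm_num
  | cons p l ih =>
    intro hb j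
    have hp := hb p List.mem_cons_self
    have ih' := ih (fun x hx => hb x (List.mem_cons_of_mem p hx))
    have := ih' j; have := ih' (j-1)
    have h1 : (0:ℝ) ≤ 1 - p := by linarith [hp.2]
    rw [fL_cons]
    nlinarith [hp.1]

theorem fL_big : ∀ (l : List ℝ) (j : ℤ), (l.length : ℤ) < j → fL l j = 0 := by
  intro l
  induction l with
  | nil => intro j hj; simp at hj ⊢; omega
  | cons p l ih =>
    intro j hj
    simp only [List.length_cons] at hj
    rw [fL_cons, ih j (by push_cast at hj ⊢; omega), ih (j-1) (by push_cast at hj ⊢; omega)]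
    ring

theorem fL_perm {l₁ l₂ : List ℝ} (h : l₁.Perm l₂) : ∀ j, fL l₁ j = fL l₂ j := by
  induction h with
  | nil => intro _; rfl
  | cons x _ ih => intro j; simp [fL_cons, ih]
  | swap x y l =>
    intro j
    simp only [fL_cons]
    rw [show j - 1 - 1 = j - 2 by ring]
    ring
  | trans _ _ ih1 ih2 => intro j; rw [ih1, ih2]

theorem fL_pair (u v : ℝ) (t : List ℝ) (m : ℤ) :
    fL (u :: v :: t) m = ((1 - (u + v)) * fL t m + (u + v) * fL t (m - 1))
      + (u * v) * (fL t m - 2 * fL t (m - 1) + fL t (m - 2)) := by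
  simp only [fL_cons]
  rw [show m - 1 - 1 = m - 2 by ring]
  ring

theorem fL_replicate (c : ℝ) : ∀ (n : ℕ) (j : ℕ),
    fL (List.replicate n c) (j : ℤ) = (n.choose j : ℝ) * c ^ j * (1 - c) ^ (n - j) := by
  intro n
  induction n with
  | zero =>
    intro j
    cases j with
    | zero => simp [fL]
    | succ i =>
      rw [Nat.choose_eq_zero_of_lt (by omega)]
      simp only [List.replicate, fL_nil]
      rw [if_neg (by push_cast; omega)]
      simp
  | succ n ih =>
    intro j
    rw [List.replicate_succ, fL_cons]
    cases j with
    | zero =>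
      have h0 := ih 0
      simp only [Nat.cast_zero] at h0 ⊢
      rw [show (0:ℤ) - 1 = -1 by ring, fL_neg (List.replicate n c) (-1) (by norm_num), h0]
      simp only [Nat.choose_zero_right, Nat.sub_zero, Nat.cast_one]
      ring
    | succ i =>
      have hcast : ((i + 1 : ℕ) : ℤ) - 1 = (i : ℤ) := by push_cast; ring
      rw [hcast, ih (i+1), ih i]
      rcases lt_trichotomy i n with hin | hin | hin
      · -- i < n
        have h1 : n - i = (n - (i+1)) + 1 := by omega
        have h2 : (n+1) - (i+1) = n - i := by omega
        rw [h2, h1, Nat.choose_succ_succ n i]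
        push_cast
        ring
      · -- i = n
        subst hin
        simp [Nat.choose_succ_self, Nat.choose_self]
        ring
      · -- i > n
        rw [Nat.choose_eq_zero_of_lt (by omega), Nat.choose_eq_zero_of_lt (by omega),
          Nat.choose_eq_zero_of_lt (by omega)]
        simp

theorem bin_peak (n k : ℕ) (c : ℝ) (hc0 : 0 < c) (hc1 : c < 1)
    (hmean : (n : ℝ) * c = k) :
    ∀ j : ℤ, j ≠ (k : ℤ) → fL (List.replicate n c) j < fL (List.replicate n c) (k : ℤ) := by
  intro j hj
  rcases Nat.eq_zero_or_pos n with hn | hn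
  · subst hn
    have hk : k = 0 := by
      have : (k : ℝ) = 0 := by rw [← hmean]; simp
      exact_mod_cast this
    subst hk
    simp only [List.replicate_zero, Nat.cast_zero, fL_nil, if_pos rfl]
    rw [if_neg (by exact_mod_cast hj)]
    norm_num
  -- now n > 0
  have hkn : k < n := by
    have hnR : (0:ℝ) < n := by exact_mod_cast hn
    have h1 : (k : ℝ) < n := by nlinarith
    exact_mod_cast h1
  have hk0 : 0 < k := by
    have hnR : (0:ℝ) < n := by exact_mod_cast hn
    have h1 : (0 : ℝ) < k := by nlinarith
    exact_mod_cast h1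
  set B : ℕ → ℝ := fun i => (n.choose i : ℝ) * c ^ i * (1 - c) ^ (n - i) with hB
  have hBpos : ∀ i, i ≤ n → 0 < B i := by
    intro i hi
    have h3 : 0 < (n.choose i : ℝ) := by
      exact_mod_cast Nat.choose_pos hi
    exact mul_pos (mul_pos h3 (pow_pos hc0 i)) (pow_pos (by linarith) _)
  -- ratio identity
  have hratio : ∀ i, i < n → B (i+1) * ((i+1 : ℝ) * (1 - c)) = B i * ((n - i : ℝ) * c) := by
    intro i hi
    have hch : (n.choose (i+1) : ℝ) * ((i:ℝ)+1) = (n.choose i : ℝ) * ((n:ℝ) - (i:ℝ)) := by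
      have h2 := congrArg (Nat.cast : ℕ → ℝ) (Nat.choose_succ_right_eq n i)
      push_cast [Nat.cast_sub (le_of_lt hi)] at h2
      linarith
    have hsub : n - (i+1) + 1 = n - i := by omega
    calc B (i+1) * ((i+1 : ℝ) * (1 - c))
        = ((n.choose (i+1) : ℝ) * (i+1)) * c ^ (i+1) * ((1-c) ^ (n-(i+1)) * (1-c)) := by
          rw [hB]; ring
      _ = ((n.choose i : ℝ) * (n - i)) * c ^ (i+1) * (1-c) ^ (n-i) := by
          push_cast
          rw [hch, ← pow_succ, hsub]
      _ = B i * ((n - i : ℝ) * c) := by rw [hB]; ring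
  -- the mean reformulation: (n-i)c - (i+1)(1-c) = k + c - (i+1)
  have hkey : ∀ i : ℕ, i < n → ((n - i : ℝ) * c - (i+1) * (1 - c)) = (k : ℝ) + c - (i+1) := by
    intro i hi
    rw [← hmean]; ring
  have hup : ∀ i, i + 1 ≤ k → B i < B (i+1) := by
    intro i hik
    have hi : i < n := by omega
    have hpos : (0:ℝ) < ((i:ℝ)+1) * (1 - c) := mul_pos (by positivity) (by linarith)
    have h1 : B i * (((i:ℝ)+1) * (1-c)) < B i * (((n:ℝ) - (i:ℝ)) * c) := by
      apply mul_lt_mul_of_pos_left _ (hBpos i (by omega))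
      have := hkey i hi
      have hik' : (i : ℝ) + 1 ≤ (k : ℝ) := by exact_mod_cast hik
      nlinarith
    have h2 := hratio i hi
    nlinarith
  have hdown : ∀ i, k ≤ i → i < n → B (i+1) < B i := by
    intro i hik hi
    have hpos : (0:ℝ) < ((i:ℝ)+1) * (1 - c) := mul_pos (by positivity) (by linarith)
    have h1 : B i * (((n:ℝ) - (i:ℝ)) * c) < B i * (((i:ℝ)+1) * (1-c)) := by
      apply mul_lt_mul_of_pos_left _ (hBpos i (by omega))
      have := hkey i hi
      have hik' : (k : ℝ) ≤ (i : ℝ) := by exact_mod_cast hik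
      nlinarith
    have h2 := hratio i hi
    nlinarith
  -- monotone chains
  have chainup : ∀ a, a < k → B a < B k := by
    intro a ha
    have aux : ∀ d, a + 1 + d ≤ k → B a < B (a + 1 + d) := by
      intro d
      induction d with
      | zero => intro _; simpa using hup a (by omega)
      | succ d ihd =>
        intro h
        have e : a + 1 + (d+1) = (a+1+d) + 1 := by omega
        rw [e]
        exact lt_trans (ihd (by omega)) (hup (a+1+d) (by omega))
    have h2 := aux (k - (a+1)) (by omega)
    have e : a + 1 + (k - (a+1)) = k := by omega
    rwa [e] at h2
  have chaindown : ∀ a, k < a → a ≤ n → B a < B k := by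
    intro a hka han
    have aux : ∀ d, k + 1 + d ≤ n → B (k+1+d) < B k := by
      intro d
      induction d with
      | zero => intro h; simpa using hdown k le_rfl (by omega)
      | succ d ihd =>
        intro h
        have e : k + 1 + (d+1) = (k+1+d) + 1 := by omega
        rw [e]
        exact lt_trans (hdown (k+1+d) (by omega) (by omega)) (ihd (by omega))
    have h2 := aux (a - (k+1)) (by omega)
    have e : k + 1 + (a - (k+1)) = a := by omega
    rwa [e] at h2
  have hfk : fL (List.replicate n c) (k : ℤ) = B k := fL_replicate c n k
  have hBk : 0 < B k := hBpos k (by omega)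
  rcases lt_or_ge j 0 with hj0 | hj0
  · rw [hfk, fL_neg _ _ hj0]; exact hBk
  · rcases le_or_gt j (n : ℤ) with hjn | hjn
    · obtain ⟨i, rfl⟩ : ∃ i : ℕ, j = (i : ℤ) := ⟨j.toNat, (Int.toNat_of_nonneg (by omega)).symm⟩
      rw [hfk, fL_replicate c n i]
      have hik : i ≠ k := by exact_mod_cast hj
      rcases lt_or_gt_of_ne hik with h | h
      · exact chainup i h
      · exact chaindown i h (by exact_mod_cast hjn)
    · rw [hfk, fL_big _ _ (by simpa using hjn)]; exact hBk

theorem cont_fL {ι : Type*} (L : List ι) : ∀ (m : ℤ),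
    Continuous fun q : ι → ℝ => fL (L.map q) m := by
  induction L with
  | nil => intro m; simp only [List.map_nil]; exact continuous_const
  | cons a L ih =>
    intro m
    simp only [List.map_cons, fL_cons]
    exact ((continuous_const.sub (continuous_apply a)).mul (ih m)).add
      ((continuous_apply a).mul (ih (m-1)))

theorem cont_lsum {ι : Type*} (L : List ι) :
    Continuous fun q : ι → ℝ => (L.map q).sum := by
  induction L with
  | nil => simp only [List.map_nil]; exact continuous_const
  | cons a L ih =>
    simp only [List.map_cons, List.sum_cons]
    exact (continuous_apply a).add ih

theorem pb_main : ∀ (n : ℕ) (l : List ℝ), l.length = n →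
    (∀ x ∈ l, 0 ≤ x ∧ x ≤ 1) → ∀ (k : ℕ), l.sum = (k : ℝ) →
    ∀ j : ℤ, j ≠ (k : ℤ) → fL l j < fL l (k : ℤ) := by
  intro n
  induction n with
  | zero =>
    intro l hlen hb k hsum j hj
    have hl : l = [] := List.length_eq_zero_iff.mp hlen
    subst hl
    have hk : k = 0 := by
      have : (k : ℝ) = 0 := by rw [← hsum]; simp
      exact_mod_cast this
    subst hk
    simp only [Nat.cast_zero, fL_nil, if_pos rfl]
    rw [if_neg (by exact_mod_cast hj)]
    norm_num
  | succ m ih =>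
    intro l hlen hb k hsum j hj
    classical
    set N := m + 1 with hN
    -- configuration space machinery
    set Ψ : (Fin N → ℝ) → ℤ → ℝ := fun q t => fL ((List.finRange N).map q) t with hΨ
    set Φ : (Fin N → ℝ) → ℝ := fun q => Ψ q (k : ℤ) - Ψ q j with hΦ
    set K : Set (Fin N → ℝ) :=
      {q | (∀ i, 0 ≤ q i ∧ q i ≤ 1) ∧ ((List.finRange N).map q).sum = (k : ℝ)} with hK
    -- the starting point from l
    have hlen' : l.length = N := hlen
    set p₀ : Fin N → ℝ := fun i => l.getD i.val 0 with hp₀def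
    have hp₀ : (List.finRange N).map p₀ = l := by
      apply List.ext_getElem (by simp [hlen'])
      intro i h1 h2
      simp only [List.getElem_map, List.getElem_finRange, hp₀def]
      rw [List.getD_eq_getElem l 0 (by simpa [hlen'] using h2)]
      simp
    have hp₀K : p₀ ∈ K := by
      constructor
      · intro i
        have hilt : i.val < l.length := by rw [hlen']; exact i.isLt
        have hmem : l.getD i.val 0 ∈ l := by
          rw [List.getD_eq_getElem l 0 hilt]
          exact List.getElem_mem hilt
        exact hb _ hmem
      · rw [hp₀]; exact hsum
    -- compactness
    have hKcpt : IsCompact K := by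
      have h1 : IsCompact (Set.pi Set.univ fun _ : Fin N => Set.Icc (0:ℝ) 1) :=
        isCompact_univ_pi fun _ => isCompact_Icc
      have h2 : IsClosed {q : Fin N → ℝ | ((List.finRange N).map q).sum = (k : ℝ)} :=
        isClosed_eq (cont_lsum _) continuous_const
      have : K = (Set.pi Set.univ fun _ : Fin N => Set.Icc (0:ℝ) 1) ∩
          {q : Fin N → ℝ | ((List.finRange N).map q).sum = (k : ℝ)} := by
        ext q
        simp only [hK, Set.mem_inter_iff, Set.mem_pi, Set.mem_univ, forall_true_left,
          Set.mem_Icc, Set.mem_setOf_eq]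
      rw [this]
      exact h1.inter_right h2
    have hcont : ContinuousOn Φ K := ((cont_fL _ _).sub (cont_fL _ _)).continuousOn
    obtain ⟨P, hPK, hPmin'⟩ := hKcpt.exists_isMinOn ⟨p₀, hp₀K⟩ hcont
    have hPmin : ∀ q ∈ K, Φ P ≤ Φ q := fun q hq => hPmin' hq
    -- it suffices to show Φ P > 0
    suffices hpos : 0 < Φ P by
      have h1 := hPmin p₀ hp₀K
      have h2 : Φ p₀ = fL l (k : ℤ) - fL l j := by
        simp only [hΦ, hΨ, hp₀]
      rw [h2] at h1
      linarith
    -- reduction lemma: boundary coordinate ⇒ positive via IH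
    have reduce : ∀ q ∈ K, ∀ i : Fin N, (q i = 0 ∨ q i = 1) → 0 < Φ q := by
      intro q hq i hi
      have hperm : (List.finRange N).Perm (i :: (List.finRange N).erase i) :=
        List.perm_cons_erase (List.mem_finRange i)
      have hpm : ((List.finRange N).map q).Perm
          (q i :: ((List.finRange N).erase i).map q) := by
        simpa using hperm.map q
      set rest := ((List.finRange N).erase i).map q with hrest
      have hrl : rest.length = m := by
        simp [hrest, List.length_erase_of_mem (List.mem_finRange i)]; omega
      have hrb : ∀ x ∈ rest, 0 ≤ x ∧ x ≤ 1 := by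
        intro x hx
        obtain ⟨a, _, rfl⟩ := List.mem_map.mp hx
        exact hq.1 a
      have hfeq : ∀ t, Ψ q t = fL (q i :: rest) t := fun t => fL_perm hpm t
      have hsum' : q i + rest.sum = (k : ℝ) := by
        have h3 := hpm.sum_eq
        rw [List.sum_cons] at h3
        rw [← h3]
        exact hq.2
      rcases hi with h0 | h1
      · have hfr : ∀ t, fL (q i :: rest) t = fL rest t := by
          intro t; rw [fL_cons, h0]; ring
        have hred := ih rest hrl hrb k (by rw [h0] at hsum'; linarith) j hj
        have : Φ q = fL rest (k:ℤ) - fL rest j := by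
          simp only [hΦ, hfeq, hfr]
        rw [this]; linarith
      · have hfr : ∀ t, fL (q i :: rest) t = fL rest (t - 1) := by
          intro t; rw [fL_cons, h1]; ring
        have hrs : rest.sum = (k : ℝ) - 1 := by rw [h1] at hsum'; linarith
        have hk1 : 1 ≤ k := by
          by_contra hcon
          have hk0 : k = 0 := by omega
          have : (0:ℝ) ≤ rest.sum := List.sum_nonneg fun x hx => (hrb x hx).1
          rw [hrs, hk0] at this; norm_num at this
        set k' := k - 1 with hk'
        have hsum'' : rest.sum = (k' : ℝ) := by
          rw [hrs]; push_cast [hk', Nat.cast_sub hk1]; ring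
        have hjk' : j - 1 ≠ (k' : ℤ) := by
          intro hcon
          apply hj
          have : (k' : ℤ) = (k : ℤ) - 1 := by push_cast [hk', Nat.cast_sub hk1]; ring
          omega
        have hred := ih rest hrl hrb k' hsum'' (j - 1) hjk'
        have hkk : (k : ℤ) - 1 = (k' : ℤ) := by push_cast [hk', Nat.cast_sub hk1]; ring
        have : Φ q = fL rest ((k:ℤ) - 1) - fL rest (j - 1) := by
          simp only [hΦ, hfeq, hfr]
        rw [this, hkk]; linarith
    -- case analysis on the minimizer P
    by_cases hbd : ∃ i, P i = 0 ∨ P i = 1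
    · obtain ⟨i, hi⟩ := hbd
      exact reduce P hPK i hi
    push_neg at hbd
    by_cases huneq : ∃ i₀ j₀ : Fin N, P i₀ ≠ P j₀
    · -- surgery case
      obtain ⟨i₀, j₀, hne⟩ := huneq
      have hij : i₀ ≠ j₀ := fun h => hne (by rw [h])
      set x := P i₀ with hx
      set y := P j₀ with hy
      have hnodup1 : ((List.finRange N).erase i₀).Nodup := (List.nodup_finRange N).erase _
      have hmem2 : j₀ ∈ (List.finRange N).erase i₀ :=
        (List.mem_erase_of_ne hij.symm).mpr (List.mem_finRange _)
      set E := ((List.finRange N).erase i₀).erase j₀ with hE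
      have hpE : (List.finRange N).Perm (i₀ :: j₀ :: E) :=
        (List.perm_cons_erase (List.mem_finRange i₀)).trans
          ((List.perm_cons_erase hmem2).cons i₀)
      have hi₀E : i₀ ∉ E := by
        intro hcon
        have := (hnodup1.mem_erase_iff.mp hcon).2
        exact ((List.nodup_finRange N).mem_erase_iff.mp this).1 rfl
      have hj₀E : j₀ ∉ E := fun hcon => (hnodup1.mem_erase_iff.mp hcon).1 rfl
      set t := E.map P with ht
      set q : ℝ → ℝ → (Fin N → ℝ) :=
        fun u v => Function.update (Function.update P i₀ u) j₀ v with hqdef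
      have hqi : ∀ u v, q u v i₀ = u := by
        intro u v
        rw [hqdef]
        simp only []
        rw [Function.update_of_ne hij, Function.update_self]
      have hqj : ∀ u v, q u v j₀ = v := by
        intro u v; rw [hqdef]; simp only []; rw [Function.update_self]
      have hqo : ∀ u v a, a ≠ i₀ → a ≠ j₀ → q u v a = P a := by
        intro u v a ha1 ha2
        rw [hqdef]; simp only []
        rw [Function.update_of_ne ha2, Function.update_of_ne ha1]
      have hqmap : ∀ u v, ((List.finRange N).map (q u v)).Perm (u :: v :: t) := by
        intro u v
        have h1 := hpE.map (q u v)
        simp only [List.map_cons] at h1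
        rw [hqi, hqj] at h1
        have h2 : E.map (q u v) = E.map P := by
          apply List.map_congr_left
          intro a ha
          exact hqo u v a (fun hc => hi₀E (hc ▸ ha)) (fun hc => hj₀E (hc ▸ ha))
        rwa [h2] at h1
      have hΦq : ∀ u v, Φ (q u v) = fL (u :: v :: t) (k:ℤ) - fL (u :: v :: t) j := by
        intro u v
        simp only [hΦ, hΨ]
        rw [fL_perm (hqmap u v), fL_perm (hqmap u v)]
      set s := x + y with hs
      set A : ℝ := ((1 - s) * fL t (k:ℤ) + s * fL t ((k:ℤ) - 1))
        - ((1 - s) * fL t j + s * fL t (j - 1)) with hA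
      set Bc : ℝ := (fL t (k:ℤ) - 2 * fL t ((k:ℤ)-1) + fL t ((k:ℤ)-2))
        - (fL t j - 2 * fL t (j-1) + fL t (j-2)) with hBc
      have hlin : ∀ u v, u + v = s → Φ (q u v) = A + (u * v) * Bc := by
        intro u v huv
        rw [hΦq, fL_pair, fL_pair, huv, hA, hBc]
        ring
      have hPq : q x y = P := by
        funext a
        by_cases ha : a = j₀
        · subst ha; rw [hqj]
        · by_cases ha2 : a = i₀
          · subst ha2; rw [hqi]
          · rw [hqo x y a ha2 ha]
      have hΦP : Φ P = A + (x * y) * Bc := by rw [← hPq]; exact hlin x y hs.symm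
      have hsumq : ∀ u v, ((List.finRange N).map (q u v)).sum = u + v + t.sum := by
        intro u v
        rw [(hqmap u v).sum_eq]
        simp [List.sum_cons]; ring
      have hsxy : x + y + t.sum = (k : ℝ) := by
        have := hsumq x y
        rw [hPq] at this
        rw [← this]
        exact hPK.2
      have hx01 := hPK.1 i₀
      have hy01 := hPK.1 j₀
      have hKq : ∀ u v, 0 ≤ u → u ≤ 1 → 0 ≤ v → v ≤ 1 → u + v = s → q u v ∈ K := by
        intro u v h1 h2 h3 h4 h5
        constructor
        · intro a
          by_cases ha : a = j₀
          · subst ha; rw [hqj]; exact ⟨h3, h4⟩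
          · by_cases ha2 : a = i₀
            · subst ha2; rw [hqi]; exact ⟨h1, h2⟩
            · rw [hqo u v a ha2 ha]; exact hPK.1 a
        · rw [hsumq, h5, hs]; exact hsxy
      rcases le_or_gt 0 Bc with hB | hB
      · -- push to the lower endpoint
        rcases le_or_gt s 1 with hs1 | hs1
        · -- (u,v) = (s, 0)
          have hqK := hKq s 0 (by rw [hs]; linarith [hx01.1, hy01.1]) hs1 le_rfl
            (by norm_num) (by ring)
          have hval : Φ (q s 0) = A := by
            rw [hlin s 0 (by ring)]; ring
          have hle : Φ (q s 0) ≤ Φ P := by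
            rw [hval, hΦP]
            have h9 := mul_nonneg (mul_nonneg hx01.1 hy01.1) hB
            linarith
          have hge := hPmin _ hqK
          have hred := reduce _ hqK j₀ (Or.inl (hqj s 0))
          linarith
        · -- (u,v) = (1, s - 1)
          have hqK := hKq 1 (s - 1) (by norm_num) le_rfl (by linarith)
            (by rw [hs]; linarith [hx01.2, hy01.2]) (by ring)
          have hval : Φ (q 1 (s-1)) = A + (s - 1) * Bc := by
            rw [hlin 1 (s-1) (by ring)]; ring
          have hle : Φ (q 1 (s-1)) ≤ Φ P := by
            rw [hval, hΦP]
            have hfact : s - 1 ≤ x * y := by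
              rw [hs]
              nlinarith [mul_nonneg (sub_nonneg.mpr hx01.2) (sub_nonneg.mpr hy01.2)]
            have h9 := mul_le_mul_of_nonneg_right hfact hB
            linarith
          have hge := hPmin _ hqK
          have hred := reduce _ hqK i₀ (Or.inr (hqi 1 (s-1)))
          linarith
      · -- Bc < 0 : contradiction with minimality via midpoint
        exfalso
        have hqK := hKq (s/2) (s/2) (by rw [hs]; linarith [hx01.1, hy01.1])
          (by rw [hs]; linarith [hx01.2, hy01.2]) (by rw [hs]; linarith [hx01.1, hy01.1])
          (by rw [hs]; linarith [hx01.2, hy01.2]) (by ring)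
        have hval : Φ (q (s/2) (s/2)) = A + (s/2 * (s/2)) * Bc := hlin _ _ (by ring)
        have hxy : x * y < s/2 * (s/2) := by
          rw [hs]
          have h7 : (0:ℝ) < (x - y)^2 := by
            have h8 : x - y ≠ 0 := sub_ne_zero_of_ne hne
            positivity
          have h9 : (x+y)/2 * ((x+y)/2) - x * y = (x - y)^2/4 := by ring
          linarith
        have hlt : Φ (q (s/2) (s/2)) < Φ P := by
          rw [hval, hΦP]
          have h9 := mul_lt_mul_of_neg_right hxy hB
          linarith
        exact absurd (hPmin _ hqK) (not_le.mpr hlt)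
    · -- all coordinates equal: binomial case
      push_neg at huneq
      set c := P 0 with hc
      have hrep : (List.finRange N).map P = List.replicate N c := by
        apply List.eq_replicate_iff.mpr
        constructor
        · simp
        · intro b hbmem
          obtain ⟨a, _, rfl⟩ := List.mem_map.mp hbmem
          exact huneq a 0
      have hcsum : ((N : ℕ) : ℝ) * c = k := by
        have h2 := hPK.2
        rw [hrep] at h2
        rw [← h2]
        simp [List.sum_replicate]
      have hc0 : 0 < c := lt_of_le_of_ne (hPK.1 0).1 (Ne.symm ((hbd 0).1))
      have hc1 : c < 1 := lt_of_le_of_ne (hPK.1 0).2 ((hbd 0).2)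
      have hbin := bin_peak N k c hc0 hc1 hcsum j hj
      have : Φ P = fL (List.replicate N c) (k:ℤ) - fL (List.replicate N c) j := by
        simp only [hΦ, hΨ, hrep]
      rw [this]
      linarith

/-- Probability function of a sum of n independent Bernoulli(p i) variables:
P(S = k) = Σ over k-subsets A of {0,…,n-1} of Π_{i∈A} p i · Π_{i∉A} (1 - p i). -/
noncomputable def pbPMF (n : ℕ) (p : ℕ → ℝ) (k : ℕ) : ℝ :=
  ∑ A ∈ (Finset.range n).powersetCard k,
    (∏ i ∈ A, p i) * ∏ i ∈ Finset.range n \ A, (1 - p i)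

/-- Probability function of X + Σ B_i with X ~ Poisson(λ) independent of the
Bernoulli variables. -/
noncomputable def epbPMF (lam : ℝ) (n : ℕ) (p : ℕ → ℝ) (k : ℕ) : ℝ :=
  ∑ j ∈ Finset.range (k + 1),
    Real.exp (-lam) * lam ^ (k - j) / (Nat.factorial (k - j)) * pbPMF n p j

theorem pbPMF_eq_fL (p : ℕ → ℝ) : ∀ (n : ℕ) (j : ℕ),
    pbPMF n p j = fL ((List.range n).map p) (j : ℤ) := by
  intro n
  induction n with
  | zero =>
    intro j
    cases j with
    | zero => simp [pbPMF, fL]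
    | succ i =>
      simp only [pbPMF, Finset.range_zero, List.range_zero, List.map_nil, fL_nil]
      rw [Finset.powersetCard_eq_empty.mpr (by simp)]
      rw [if_neg (by push_cast; omega)]
      simp
  | succ n ihn =>
    intro j
    have hperm : ((List.range (n+1)).map p).Perm (p n :: (List.range n).map p) := by
      rw [List.range_succ, List.map_append]
      simpa using (List.perm_append_singleton (p n) ((List.range n).map p)).symm
    rw [fL_perm hperm]
    have hnotmem : n ∉ Finset.range n := Finset.notMem_range_self
    cases j with
    | zero =>
      rw [fL_cons, show ((0:ℕ):ℤ) - 1 = -1 by norm_num,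
        fL_neg ((List.range n).map p) (-1) (by norm_num)]
      simp only [pbPMF, Finset.powersetCard_zero, Finset.sum_singleton, Finset.prod_empty,
        Finset.sdiff_empty, one_mul, Nat.cast_zero, mul_zero, add_zero]
      rw [Finset.range_add_one, Finset.prod_insert hnotmem]
      have h0 := ihn 0
      simp only [Nat.cast_zero] at h0
      rw [← h0]
      simp only [pbPMF, Finset.powersetCard_zero, Finset.sum_singleton, Finset.prod_empty,
        Finset.sdiff_empty, one_mul, Nat.cast_zero]
    | succ i =>
      rw [fL_cons]
      have hc : ((i+1 : ℕ) : ℤ) - 1 = (i : ℤ) := by push_cast; ring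
      rw [hc, ← ihn (i+1), ← ihn i]
      simp only [pbPMF]
      rw [Finset.range_add_one, Finset.powersetCard_succ_insert hnotmem]
      have hdisj : Disjoint ((Finset.range n).powersetCard (i+1))
          (((Finset.range n).powersetCard i).image (insert n)) := by
        rw [Finset.disjoint_left]
        intro A hA hA2
        obtain ⟨B, hB, rfl⟩ := Finset.mem_image.mp hA2
        have hsub := (Finset.mem_powersetCard.mp hA).1
        exact hnotmem (hsub (Finset.mem_insert_self n B))
      rw [Finset.sum_union hdisj]
      have h1 : ∀ A ∈ (Finset.range n).powersetCard (i+1),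
          (∏ i ∈ A, p i) * ∏ i ∈ insert n (Finset.range n) \ A, (1 - p i)
          = (1 - p n) * ((∏ i ∈ A, p i) * ∏ i ∈ Finset.range n \ A, (1 - p i)) := by
        intro A hA
        have hsub := (Finset.mem_powersetCard.mp hA).1
        have hna : n ∉ A := fun h => hnotmem (hsub h)
        have hsd : insert n (Finset.range n) \ A = insert n (Finset.range n \ A) := by
          ext b
          simp only [Finset.mem_sdiff, Finset.mem_range, Finset.mem_insert]
          constructor
          · rintro ⟨h | h, hb2⟩
            · exact Or.inl h
            · exact Or.inr ⟨h, hb2⟩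
          · rintro (h | ⟨hb1, hb2⟩)
            · exact ⟨Or.inl h, by rw [h]; exact hna⟩
            · exact ⟨Or.inr hb1, hb2⟩
        rw [hsd, Finset.prod_insert (by simp [Finset.mem_sdiff])]
        ring
      rw [Finset.sum_congr rfl h1, ← Finset.mul_sum]
      have hinj : ∀ A ∈ (Finset.range n).powersetCard i,
          ∀ B ∈ (Finset.range n).powersetCard i, insert n A = insert n B → A = B := by
        intro A hA B hB hAB
        have hnA : n ∉ A := fun h => hnotmem ((Finset.mem_powersetCard.mp hA).1 h)
        have hnB : n ∉ B := fun h => hnotmem ((Finset.mem_powersetCard.mp hB).1 h)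
        have := congrArg (fun S => Finset.erase S n) hAB
        simpa [Finset.erase_insert hnA, Finset.erase_insert hnB] using this
      rw [Finset.sum_image hinj]
      have h2 : ∀ A ∈ (Finset.range n).powersetCard i,
          (∏ i ∈ insert n A, p i) * ∏ i ∈ insert n (Finset.range n) \ insert n A, (1 - p i)
          = p n * ((∏ i ∈ A, p i) * ∏ i ∈ Finset.range n \ A, (1 - p i)) := by
        intro A hA
        have hsub := (Finset.mem_powersetCard.mp hA).1
        have hna : n ∉ A := fun h => hnotmem (hsub h)
        have hsd : insert n (Finset.range n) \ insert n A = Finset.range n \ A := by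
          ext b
          simp only [Finset.mem_sdiff, Finset.mem_range, Finset.mem_insert, not_or]
          constructor
          · rintro ⟨h | h, hb2, hb3⟩
            · exact absurd h hb2
            · exact ⟨h, hb3⟩
          · rintro ⟨hb1, hb2⟩
            exact ⟨Or.inr hb1, by omega, hb2⟩
        rw [hsd, Finset.prod_insert hna]
        ring
      rw [Finset.sum_congr rfl h2, ← Finset.mul_sum]

theorem stmt_18 (n : ℕ) (p : ℕ → ℝ) (hp : ∀ i, 0 ≤ p i ∧ p i ≤ 1) (k : ℕ) (hk : 1 ≤ k)
    (hmean : (∑ i ∈ Finset.range n, p i) = (k : ℝ))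
    (hnd : ¬ ∀ i < n, p i = 0 ∨ p i = 1) :
    ∀ j : ℕ, j ≠ k → pbPMF n p j < pbPMF n p k := by
  intro j hj
  set l := (List.range n).map p with hl
  have hlen : l.length = n := by simp [hl]
  have hb : ∀ x ∈ l, 0 ≤ x ∧ x ≤ 1 := by
    intro x hx
    obtain ⟨a, _, rfl⟩ := List.mem_map.mp hx
    exact hp a
  have hrs : ∀ nn : ℕ, ((List.range nn).map p).sum = ∑ i ∈ Finset.range nn, p i := by
    intro nn
    induction nn with
    | zero => simp
    | succ nn ihn =>
      rw [List.range_succ, List.map_append, List.sum_append, Finset.sum_range_succ, ihn]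
      simp
  have hsum : l.sum = (k : ℝ) := by rw [hl, hrs n, hmean]
  have := pb_main n l hlen hb k hsum (j : ℤ) (by exact_mod_cast hj)
  rw [pbPMF_eq_fL, pbPMF_eq_fL]
  exact this
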